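/- Let μ > 0 and let ψ : (0,∞) → ℝ be a nonnegative, nondecreasing, continuous, bounded function. Then the function u(x) = (1/√μ)(sinh(√μ x) ∫_x^∞ ψ(y) e^{-√μ y} dy + e^{-√μ x} ∫_0^x ψ(y) sinh(√μ y) dy) has derivative u'(x) ≥ (1/√μ) e^{-√μ x} ψ(x) > 0 whenever ψ(x) > 0; in particular u is nondecreasing on (0,∞). -/

import Mathlib

open MeasureTheory Filter Topology Set

theorem stmt2 (μ : ℝ) (hμ : 0 < μ) (ψ : ℝ → ℝ)
    (hpos : ∀ x > 0, 0 ≤ ψ x)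
    (hmono : MonotoneOn ψ (Set.Ioi 0))
    (hcont : ContinuousOn ψ (Set.Ioi 0))
    (hbdd : ∃ Cb : ℝ, ∀ x > 0, ψ x ≤ Cb)
    (u : ℝ → ℝ)
    (hu : u = fun x => (1 / Real.sqrt μ) *
      (Real.sinh (Real.sqrt μ * x) *
        (∫ y in Set.Ioi x, ψ y * Real.exp (-(Real.sqrt μ) * y)) +
       Real.exp (-(Real.sqrt μ) * x) *
        (∫ y in Set.Ioo 0 x, ψ y * Real.sinh (Real.sqrt μ * y)))) :
    (∀ x > 0,
      HasDerivAt u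
        (Real.cosh (Real.sqrt μ * x) *
          (∫ y in Set.Ioi x, ψ y * Real.exp (-(Real.sqrt μ) * y)) -
         Real.exp (-(Real.sqrt μ) * x) *
          (∫ y in Set.Ioo 0 x, ψ y * Real.sinh (Real.sqrt μ * y))) x ∧
      (1 / Real.sqrt μ) * Real.exp (-(Real.sqrt μ) * x) * ψ x ≤
        Real.cosh (Real.sqrt μ * x) *
          (∫ y in Set.Ioi x, ψ y * Real.exp (-(Real.sqrt μ) * y)) -
         Real.exp (-(Real.sqrt μ) * x) *
          (∫ y in Set.Ioo 0 x, ψ y * Real.sinh (Real.sqrt μ * y)) ∧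
      (0 < ψ x →
        0 < Real.cosh (Real.sqrt μ * x) *
          (∫ y in Set.Ioi x, ψ y * Real.exp (-(Real.sqrt μ) * y)) -
         Real.exp (-(Real.sqrt μ) * x) *
          (∫ y in Set.Ioo 0 x, ψ y * Real.sinh (Real.sqrt μ * y)))) ∧
    MonotoneOn u (Set.Ioi 0) := by
  obtain ⟨Cb, hCb⟩ := hbdd
  set s := Real.sqrt μ with hsdef
  have hs : 0 < s := Real.sqrt_pos.2 hμ
  set f : ℝ → ℝ := fun y => ψ y * Real.exp (-s * y) with hfdef
  set g : ℝ → ℝ := fun y => ψ y * Real.sinh (s * y) with hgdef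
  have hcf : ContinuousOn f (Ioi 0) :=
    hcont.mul ((Real.continuous_exp.comp (continuous_const.mul continuous_id)).continuousOn)
  have hcg : ContinuousOn g (Ioi 0) :=
    hcont.mul ((Real.continuous_sinh.comp (continuous_const.mul continuous_id)).continuousOn)
  -- integrability of f on Ioi t
  have hfint : ∀ t : ℝ, 0 < t → IntegrableOn f (Ioi t) := by
    intro t ht
    apply Integrable.mono' ((exp_neg_integrableOn_Ioi t hs).const_mul Cb)
    · exact (hcf.mono (Ioi_subset_Ioi ht.le)).aestronglyMeasurable measurableSet_Ioi
    · filter_upwards [ae_restrict_mem measurableSet_Ioi] with y hy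
      have hy0 : 0 < y := ht.trans hy
      have : 0 ≤ f y := mul_nonneg (hpos y hy0) (Real.exp_pos _).le
      rw [Real.norm_eq_abs, abs_of_nonneg this]
      exact mul_le_mul_of_nonneg_right (hCb y hy0) (Real.exp_pos _).le
  -- integrability of g on Ioc 0 t
  have hgint : ∀ t : ℝ, 0 < t → IntegrableOn g (Ioc 0 t) := by
    intro t ht
    have hCb0 : 0 ≤ Cb := le_trans (hpos t ht) (hCb t ht)
    have hconst : IntegrableOn (fun _ : ℝ => Cb * Real.sinh (s * t)) (Ioc 0 t) :=
      integrableOn_const measure_Ioc_lt_top.ne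
    apply Integrable.mono' hconst
    · exact (hcg.mono Ioc_subset_Ioi_self).aestronglyMeasurable measurableSet_Ioc
    · filter_upwards [ae_restrict_mem measurableSet_Ioc] with y hy
      have hy0 : 0 < y := hy.1
      have hsy : 0 ≤ Real.sinh (s * y) := Real.sinh_nonneg_iff.2 (by positivity)
      have : 0 ≤ g y := mul_nonneg (hpos y hy0) hsy
      rw [Real.norm_eq_abs, abs_of_nonneg this]
      exact mul_le_mul (hCb y hy0) (Real.sinh_le_sinh.2 (by nlinarith [hy.2])) hsy hCb0
  set F : ℝ → ℝ := fun t => ∫ y in Ioi t, f y with hFdef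
  set G : ℝ → ℝ := fun t => ∫ y in Ioo 0 t, g y with hGdef
  -- splitting identity for F
  have hsplit : ∀ a b : ℝ, 0 < a → a ≤ b → F a = (∫ y in a..b, f y) + F b := by
    intro a b ha hab
    rw [intervalIntegral.integral_of_le hab, hFdef]
    have hdisj : Disjoint (Ioc a b) (Ioi b) :=
      Set.disjoint_left.2 fun y hy hy' => absurd hy.2 (not_le.2 hy')
    rw [← MeasureTheory.setIntegral_union hdisj measurableSet_Ioi
      ((hfint a ha).mono_set Ioc_subset_Ioi_self) (hfint b (ha.trans_le hab)),
      Ioc_union_Ioi_eq_Ioi hab]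
  -- derivative of F
  have hFderiv : ∀ x : ℝ, 0 < x → HasDerivAt F (-(f x)) x := by
    intro x hx
    have hmeasx : StronglyMeasurableAtFilter f (𝓝 x) :=
      ⟨Ioi 0, Ioi_mem_nhds hx, (hcf.aestronglyMeasurable measurableSet_Ioi)⟩
    have hφ : HasDerivAt (fun t => ∫ y in x..t, f y) (f x) x :=
      intervalIntegral.integral_hasDerivAt_right
        IntervalIntegrable.refl
        hmeasx (hcf.continuousAt (Ioi_mem_nhds hx))
    have heq : F =ᶠ[𝓝 x] fun t => F x - ∫ y in x..t, f y := by
      filter_upwards [Ioi_mem_nhds hx] with t ht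
      rcases le_total x t with h | h
      · have := hsplit x t hx h; linarith
      · have := hsplit t x ht h
        rw [intervalIntegral.integral_symm] at this
        linarith
    exact (hφ.const_sub (F x)).congr_of_eventuallyEq heq
  -- derivative of G
  have hGderiv : ∀ x : ℝ, 0 < x → HasDerivAt G (g x) x := by
    intro x hx
    have hintg : IntervalIntegrable g volume 0 x := by
      rw [intervalIntegrable_iff, uIoc_of_le hx.le]
      exact hgint x hx
    have hmeasx : StronglyMeasurableAtFilter g (𝓝 x) :=
      ⟨Ioi 0, Ioi_mem_nhds hx, hcg.aestronglyMeasurable measurableSet_Ioi⟩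
    have hφ : HasDerivAt (fun t => ∫ y in (0:ℝ)..t, g y) (g x) x :=
      intervalIntegral.integral_hasDerivAt_right hintg hmeasx
        (hcg.continuousAt (Ioi_mem_nhds hx))
    refine hφ.congr_of_eventuallyEq ?_
    filter_upwards [Ioi_mem_nhds hx] with t ht
    rw [hGdef]
    simp only
    rw [← MeasureTheory.integral_Ioc_eq_integral_Ioo,
      ← intervalIntegral.integral_of_le ht.le]
  -- derivative of u
  have huderiv : ∀ x : ℝ, 0 < x →
      HasDerivAt (fun t => (1 / s) * (Real.sinh (s * t) * F t + Real.exp (-s * t) * G t))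
        (Real.cosh (s * x) * F x - Real.exp (-s * x) * G x) x := by
    intro x hx
    have h1 : HasDerivAt (fun t : ℝ => Real.sinh (s * t)) (Real.cosh (s * x) * s) x :=
      ((hasDerivAt_id x).const_mul s).sinh.congr_deriv (by simp only [id_eq]; ring)
    have h2 : HasDerivAt (fun t : ℝ => Real.exp (-s * t)) (Real.exp (-s * x) * (-s)) x :=
      ((hasDerivAt_id x).const_mul (-s)).exp.congr_deriv (by simp only [id_eq]; ring)
    have := (((h1.mul (hFderiv x hx)).add (h2.mul (hGderiv x hx))).const_mul (1 / s))
    refine this.congr_deriv ?_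
    rw [hfdef, hgdef]
    simp only
    field_simp
    ring
  -- exponential integral
  have hexp_int : ∀ x : ℝ, ∫ y in Ioi x, Real.exp (-s * y) = Real.exp (-s * x) / s := by
    intro x
    have hderiv : ∀ y ∈ Ioi x,
        HasDerivAt (fun y => -(Real.exp (-s * y) / s)) (Real.exp (-s * y)) y := by
      intro y _
      have h : HasDerivAt (fun y : ℝ => Real.exp (-s * y)) (Real.exp (-s * y) * (-s)) y :=
        ((hasDerivAt_id y).const_mul (-s)).exp.congr_deriv (by simp only [id_eq]; ring)
      exact ((h.div_const s).neg).congr_deriv (by field_simp)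
    have hcont' : ContinuousWithinAt (fun y => -(Real.exp (-s * y) / s)) (Ici x) x :=
      (((Real.continuous_exp.comp (continuous_const.mul continuous_id)).div_const s).neg).continuousWithinAt
    have htend0 : Tendsto (fun y : ℝ => Real.exp (-s * y)) atTop (𝓝 0) := by
      have h1 : Tendsto (fun y : ℝ => s * y) atTop atTop :=
        Tendsto.const_mul_atTop hs tendsto_id
      have h2 := Real.tendsto_exp_neg_atTop_nhds_zero.comp h1
      simpa [Function.comp_def, neg_mul] using h2
    have htend : Tendsto (fun y => -(Real.exp (-s * y) / s)) atTop (𝓝 0) := by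
      simpa using (htend0.div_const s).neg
    rw [integral_Ioi_of_hasDerivAt_of_tendsto hcont' hderiv (exp_neg_integrableOn_Ioi x hs) htend]
    ring
  -- lower bound for F
  have hFlb : ∀ x : ℝ, 0 < x → ψ x * (Real.exp (-s * x) / s) ≤ F x := by
    intro x hx
    have h1 : ∫ y in Ioi x, ψ x * Real.exp (-s * y) = ψ x * (Real.exp (-s * x) / s) := by
      rw [integral_const_mul, hexp_int]
    rw [← h1]
    refine setIntegral_mono_on ((exp_neg_integrableOn_Ioi x hs).const_mul (ψ x)) (hfint x hx)
      measurableSet_Ioi ?_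
    intro y hy
    exact mul_le_mul_of_nonneg_right
      (hmono (mem_Ioi.2 hx) (mem_Ioi.2 (hx.trans hy)) (le_of_lt hy)) (Real.exp_pos _).le
  -- upper bound for G
  have hGub : ∀ x : ℝ, 0 < x → G x ≤ ψ x * ((Real.cosh (s * x) - 1) / s) := by
    intro x hx
    have hsinh_int : ∫ y in Ioo 0 x, Real.sinh (s * y) = (Real.cosh (s * x) - 1) / s := by
      rw [← MeasureTheory.integral_Ioc_eq_integral_Ioo, ← intervalIntegral.integral_of_le hx.le]
      have hd : ∀ y ∈ uIcc (0:ℝ) x,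
          HasDerivAt (fun y => Real.cosh (s * y) / s) (Real.sinh (s * y)) y := by
        intro y _
        have h : HasDerivAt (fun y : ℝ => Real.cosh (s * y)) (Real.sinh (s * y) * s) y :=
          ((hasDerivAt_id y).const_mul s).cosh.congr_deriv (by simp only [id_eq]; ring)
        exact (h.div_const s).congr_deriv (by field_simp)
      rw [intervalIntegral.integral_eq_sub_of_hasDerivAt hd
        ((Real.continuous_sinh.comp (continuous_const.mul continuous_id)).intervalIntegrable 0 x)]
      rw [mul_zero, Real.cosh_zero]
      ring
    have h1 : ∫ y in Ioo 0 x, ψ x * Real.sinh (s * y) = ψ x * ((Real.cosh (s * x) - 1) / s) := by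
      rw [integral_const_mul, hsinh_int]
    have hconst2 : IntegrableOn (fun y => ψ x * Real.sinh (s * y)) (Ioo 0 x) :=
      ((continuous_const.mul
        (Real.continuous_sinh.comp (continuous_const.mul continuous_id))).integrableOn_Ioc).mono_set
        Ioo_subset_Ioc_self
    calc G x ≤ ∫ y in Ioo 0 x, ψ x * Real.sinh (s * y) := by
          refine setIntegral_mono_on ((hgint x hx).mono_set Ioo_subset_Ioc_self) hconst2
            measurableSet_Ioo ?_
          intro y hy
          exact mul_le_mul_of_nonneg_right (hmono (mem_Ioi.2 hy.1) (mem_Ioi.2 hx) hy.2.le)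
            (Real.sinh_nonneg_iff.2 (mul_nonneg hs.le hy.1.le))
      _ = _ := h1
  -- the key inequality
  have hineq : ∀ x : ℝ, 0 < x →
      1 / s * Real.exp (-s * x) * ψ x ≤ Real.cosh (s * x) * F x - Real.exp (-s * x) * G x := by
    intro x hx
    have hc : (0:ℝ) ≤ Real.cosh (s * x) := (Real.cosh_pos _).le
    have h1 := mul_le_mul_of_nonneg_left (hFlb x hx) hc
    have h2 := mul_le_mul_of_nonneg_left (hGub x hx) (Real.exp_pos (-s * x)).le
    have hkey : Real.cosh (s * x) * (ψ x * (Real.exp (-s * x) / s)) -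
        Real.exp (-s * x) * (ψ x * ((Real.cosh (s * x) - 1) / s)) =
        1 / s * Real.exp (-s * x) * ψ x := by
      field_simp
      ring
    linarith
  have huderiv' : ∀ x : ℝ, 0 < x → HasDerivAt u
      (Real.cosh (s * x) * F x - Real.exp (-s * x) * G x) x := by
    intro x hx
    rw [hu]
    exact huderiv x hx
  constructor
  · intro x hx
    exact ⟨huderiv' x hx, hineq x hx, fun hψ =>
      lt_of_lt_of_le (mul_pos (mul_pos (one_div_pos.2 hs) (Real.exp_pos _)) hψ) (hineq x hx)⟩
  · refine monotoneOn_of_deriv_nonneg (convex_Ioi 0)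
      (fun x hx => (huderiv' x hx).continuousAt.continuousWithinAt)
      (fun x hx => ?_) (fun x hx => ?_)
    · rw [interior_Ioi] at hx
      exact (huderiv' x hx).differentiableAt.differentiableWithinAt
    · rw [interior_Ioi] at hx
      rw [(huderiv' x hx).deriv]
      have h := hineq x hx
      have h0 : 0 ≤ 1 / s * Real.exp (-s * x) * ψ x :=
        mul_nonneg (mul_nonneg (one_div_pos.2 hs).le (Real.exp_pos _).le) (hpos x hx)
      linarith
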